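/- Let Q be a positive semidefinite n×n Hermitian matrix, y ∈ ℂⁿ, and z ∈ ℂ with Im(z) > 0. Then |z| · |1 + y* (Q - zI)⁻¹ y| ≥ Im(z). -/

import Mathlib

open Matrix
open scoped ComplexOrder

/-- For a positive semidefinite matrix `Q`, any vector `y` and `Im z > 0`, we have
`|z| · |1 + yᴴ (Q - z)⁻¹ y| ≥ Im z`. -/
theorem quadratic_form_resolvent_lower_bound (n : ℕ) (Q : Matrix (Fin n) (Fin n) ℂ)
    (hQ : Q.PosSemidef) (y : Fin n → ℂ) (z : ℂ) (hz : 0 < z.im) :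
    z.im ≤ ‖z‖ * ‖
        (1 + star y ⬝ᵥ ((Q - z • (1 : Matrix (Fin n) (Fin n) ℂ))⁻¹).mulVec y)‖ := by
  set M : Matrix (Fin n) (Fin n) ℂ := Q - z • 1 with hM
  -- M is invertible
  have hdet : IsUnit M.det := by
    by_contra h
    rw [isUnit_iff_ne_zero, not_not, ← Matrix.exists_mulVec_eq_zero_iff] at h
    obtain ⟨v, hv, hMv⟩ := h
    have hQv : Q *ᵥ v = z • v := by
      have : Q *ᵥ v - z • v = 0 := by
        simpa [hM, Matrix.sub_mulVec, Matrix.smul_mulVec] using hMv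
      exact sub_eq_zero.mp this
    have hpos := hQ.dotProduct_mulVec_nonneg v
    have him : (star v ⬝ᵥ Q *ᵥ v).im = 0 := by
      rw [Complex.le_def] at hpos
      exact hpos.2.symm
    have hsim0 : (star v ⬝ᵥ v).im = 0 := by
      simp only [dotProduct, Complex.im_sum, Pi.star_apply, Complex.mul_im,
        Complex.star_def, Complex.conj_re, Complex.conj_im]
      exact Finset.sum_eq_zero fun i _ => by ring
    have hsre : 0 < (star v ⬝ᵥ v).re := by
      have : (0:ℂ) < star v ⬝ᵥ v := by
        refine lt_of_le_of_ne (dotProduct_star_self_nonneg v) ?_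
        intro h0
        exact hv (dotProduct_star_self_eq_zero.mp h0.symm)
      rw [Complex.lt_def] at this
      simpa using this.1
    rw [hQv] at him
    have : (z * (star v ⬝ᵥ v)).im = 0 := by simpa [dotProduct_smul, smul_eq_mul] using him
    rw [Complex.mul_im, hsim0] at this
    nlinarith
  set x : Fin n → ℂ := M⁻¹ *ᵥ y with hx
  have hy : M *ᵥ x = y := by
    rw [hx, Matrix.mulVec_mulVec, Matrix.mul_nonsing_inv M hdet, Matrix.one_mulVec]
  -- compute star y ⬝ᵥ x
  have hkey : star y ⬝ᵥ x = star x ⬝ᵥ Q *ᵥ x - (starRingEnd ℂ) z * (star x ⬝ᵥ x) := by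
    rw [← hy, Matrix.star_mulVec, ← Matrix.dotProduct_mulVec]
    have hMH : Mᴴ = Q - (starRingEnd ℂ) z • 1 := by
      rw [hM, Matrix.conjTranspose_sub, hQ.1.eq]
      congr 1
      simp [Matrix.conjTranspose_smul]
    rw [hMH, Matrix.sub_mulVec, dotProduct_sub, Matrix.smul_mulVec,
      Matrix.one_mulVec, dotProduct_smul, smul_eq_mul]
  set a : ℂ := star x ⬝ᵥ Q *ᵥ x with ha
  set s : ℂ := star x ⬝ᵥ x with hs
  have haim : a.im = 0 ∧ 0 ≤ a.re := by
    have := hQ.dotProduct_mulVec_nonneg x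
    rw [Complex.le_def] at this
    exact ⟨this.2.symm, by simpa using this.1⟩
  have hsim : s.im = 0 := by
    simp only [hs, dotProduct, Complex.im_sum, Pi.star_apply, Complex.mul_im,
      Complex.star_def, Complex.conj_re, Complex.conj_im]
    exact Finset.sum_eq_zero fun i _ => by ring
  -- imaginary part of z * (1 + star y ⬝ᵥ x) is at least z.im
  have him : z.im ≤ (z * (1 + star y ⬝ᵥ x)).im := by
    rw [hkey]
    have : z * (1 + (a - (starRingEnd ℂ) z * s)) = z + z * a - (z * (starRingEnd ℂ) z) * s := by
      ring
    rw [this]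
    have hzz : z * (starRingEnd ℂ) z = (Complex.normSq z : ℂ) := by
      rw [mul_comm]; exact Complex.normSq_eq_conj_mul_self.symm
    rw [hzz]
    simp only [Complex.sub_im, Complex.add_im, Complex.mul_im, Complex.ofReal_re,
      Complex.ofReal_im, haim.1, hsim]
    nlinarith [haim.2, hz]
  calc z.im ≤ (z * (1 + star y ⬝ᵥ x)).im := him
    _ ≤ ‖z * (1 + star y ⬝ᵥ x)‖ := Complex.im_le_norm _
    _ = ‖z‖ * ‖1 + star y ⬝ᵥ x‖ := norm_mul _ _
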